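/- arXiv:1604.02577 — 2 statements merged into one kernel-verified Lean document; each statement's English description precedes it below -/
import Mathlib

section
/- For every integer N ≥ p, the left ideal of U(L𝔫₋) generated by the set G = {X_i(r,s) : i ∈ I, r > 0, s < −∑_{k∈S_i} min{r,ℓ_k}} equals the left ideal of U(L𝔫₋) generated by the set G̃_N = {f_{i,k} : i ∈ I, k > N} ∪ {X̃_i^N(r,s) : i ∈ I, r > 0, s < −∑_{k∈S_i} min{r,ℓ_k}}. (This is Lemma 4.2(i) of the paper: the left U(L𝔫₋)-ideal generated by 𝓘 coincides with 𝓙.) -/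
open scoped TensorProduct

noncomputable section

/-- A Cartan matrix of finite type: `C i i = 2`, off-diagonal entries nonpositive, and
there exist positive integers `d i` symmetrizing `C` with `(d i * C i j)` positive definite. -/
def IsFiniteTypeCartanMatrix {n : ℕ} (C : Matrix (Fin n) (Fin n) ℤ) : Prop :=
  (∀ i, C i i = 2) ∧ (∀ i j, i ≠ j → C i j ≤ 0) ∧
    ∃ d : Fin n → ℤ, (∀ i, 0 < d i) ∧ (∀ i j, d i * C i j = d j * C j i) ∧
      ∀ v : Fin n → ℝ, v ≠ 0 → 0 < ∑ i, ∑ j, ((d i * C i j : ℤ) : ℝ) * v i * v j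

variable {n : ℕ} (C : Matrix (Fin n) (Fin n) ℤ)

/-- The generator `f i` of the Chevalley–Serre presented Lie algebra `𝔤(C)`. -/
def SerreF (i : Fin n) : Matrix.ToLieAlgebra ℂ C :=
  LieSubmodule.Quotient.mk (N := CartanMatrix.Relations.toIdeal ℂ C)
    (FreeLieAlgebra.of ℂ (CartanMatrix.Generators.F i))

/-- The Lie subalgebra `𝔫₋ ⊆ 𝔤(C)` generated by the `f i`. -/
def nNeg : LieSubalgebra ℂ (Matrix.ToLieAlgebra ℂ C) :=
  LieSubalgebra.lieSpan ℂ _ (Set.range (SerreF C))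

/-- The loop algebra `L𝔫₋ = 𝔫₋ ⊗ ℂ[t,t⁻¹]`. -/
abbrev LoopNNeg := LaurentPolynomial ℂ ⊗[ℂ] (nNeg C)

instance : LieAlgebra ℂ (LoopNNeg C) where
  lie_smul c x y :=
    calc ⁅x, c • y⁆ = ⁅x, (algebraMap ℂ (LaurentPolynomial ℂ) c) • y⁆ := by
          rw [algebraMap_smul]
      _ = (algebraMap ℂ (LaurentPolynomial ℂ) c) • ⁅x, y⁆ := by
          exact lie_smul (R := LaurentPolynomial ℂ) (algebraMap ℂ (LaurentPolynomial ℂ) c) x y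
      _ = c • ⁅x, y⁆ := algebraMap_smul _ _ _

/-- The universal enveloping algebra `U(L𝔫₋)` over `ℂ`. -/
abbrev ULoop := UniversalEnvelopingAlgebra ℂ (LoopNNeg C)

/-- The element `f_{i,k}`, image of `f_i ⊗ t^k` in `U(L𝔫₋)`. -/
def fik (i : Fin n) (k : ℤ) : ULoop C :=
  UniversalEnvelopingAlgebra.ι ℂ
    ((LaurentPolynomial.T k) ⊗ₜ[ℂ]
      (⟨SerreF C i, LieSubalgebra.subset_lieSpan (Set.mem_range_self i)⟩ : nNeg C))

/-- `X_i(r,s)`: the coefficient of `z^s` in `F_i(z)^r`, i.e. the sum of products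
`f_{i,k₁}⋯f_{i,k_r}` over tuples of nonnegative integers with `k₁+⋯+k_r = -s-r`. -/
def Xcoef (i : Fin n) (r : ℕ) (s : ℤ) : ULoop C :=
  if 0 ≤ -s - (r : ℤ) then
    ∑ k ∈ Finset.Nat.antidiagonalTuple r (-s - (r : ℤ)).toNat,
      (List.ofFn fun j : Fin r => fik C i (k j)).prod
  else 0

/-- `X̃_i^N(r,s)`: the sum of products `f_{i,k₁}⋯f_{i,k_r}` over integer tuples with each
`k_j ≤ N` and `k₁+⋯+k_r = -s-r` (encoded via `k_j = N - m_j`, `m_j ∈ ℕ`). -/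
def XcoefN (N : ℤ) (i : Fin n) (r : ℕ) (s : ℤ) : ULoop C :=
  if 0 ≤ (r : ℤ) * N + s + (r : ℤ) then
    ∑ m ∈ Finset.Nat.antidiagonalTuple r ((r : ℤ) * N + s + (r : ℤ)).toNat,
      (List.ofFn fun j : Fin r => fik C i (N - (m j : ℤ))).prod
  else 0

namespace L42
variable {n : ℕ} (C : Matrix (Fin n) (Fin n) ℤ) (N : ℤ) (i : Fin n)

/-- The distinguished element of `nNeg C`. -/
def ff (i : Fin n) : nNeg C :=
  ⟨SerreF C i, LieSubalgebra.subset_lieSpan (Set.mem_range_self i)⟩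

lemma fik_commute (a b : ℤ) : Commute (fik C i a) (fik C i b) := by
  have h : ⁅((LaurentPolynomial.T a : LaurentPolynomial ℂ) ⊗ₜ[ℂ] ff C i : LoopNNeg C),
      ((LaurentPolynomial.T b : LaurentPolynomial ℂ) ⊗ₜ[ℂ] ff C i : LoopNNeg C)⁆ = 0 := by
    rw [LieAlgebra.ExtendScalars.bracket_tmul, lie_self, TensorProduct.tmul_zero]
  letI : LieRing (ULoop C) := LieRing.ofAssociativeRing
  letI : LieAlgebra ℂ (ULoop C) := LieAlgebra.ofAssociativeAlgebra
  have h2 := (UniversalEnvelopingAlgebra.ι (R := ℂ) (L := LoopNNeg C)).map_lie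
    (x := (LaurentPolynomial.T a : LaurentPolynomial ℂ) ⊗ₜ[ℂ] ff C i)
    (y := (LaurentPolynomial.T b : LaurentPolynomial ℂ) ⊗ₜ[ℂ] ff C i)
  rw [h, map_zero, Ring.lie_def] at h2
  have h3 := sub_eq_zero.mp h2.symm
  show fik C i a * fik C i b = fik C i b * fik C i a
  unfold fik
  exact h3

lemma sum_adT_succ {M : Type*} [AddCommMonoid M] (k nn : ℕ) (g : (Fin (k+1) → ℕ) → M) :
    ∑ x ∈ Finset.Nat.antidiagonalTuple (k+1) nn, g x
      = ∑ pq ∈ Finset.HasAntidiagonal.antidiagonal nn,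
          ∑ y ∈ Finset.Nat.antidiagonalTuple k pq.2, g (Fin.cons pq.1 y) := by
  rw [Finset.sum_sigma']
  refine Finset.sum_nbij'
    (i := fun (x : Fin (k+1) → ℕ) =>
      (⟨(x 0, ∑ j : Fin k, x j.succ), fun j : Fin k => x j.succ⟩ : (_ : ℕ × ℕ) × (Fin k → ℕ)))
    (j := fun (q : (_ : ℕ × ℕ) × (Fin k → ℕ)) => Fin.cons q.1.1 q.2) ?_ ?_ ?_ ?_ ?_
  · intro x hx
    rw [Finset.Nat.mem_antidiagonalTuple] at hx
    refine Finset.mem_sigma.mpr ⟨Finset.HasAntidiagonal.mem_antidiagonal.mpr ?_,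
      Finset.Nat.mem_antidiagonalTuple.mpr rfl⟩
    rw [← hx, Fin.sum_univ_succ]
  · intro q hq
    obtain ⟨h1, h2⟩ := Finset.mem_sigma.mp hq
    rw [Finset.HasAntidiagonal.mem_antidiagonal] at h1
    rw [Finset.Nat.mem_antidiagonalTuple] at h2
    rw [Finset.Nat.mem_antidiagonalTuple, Fin.sum_univ_succ]
    simp only [Fin.cons_zero, Fin.cons_succ]
    rw [h2, h1]
  · intro x _; exact Fin.cons_self_tail x
  · intro q hq
    obtain ⟨h1, h2⟩ := Finset.mem_sigma.mp hq
    rw [Finset.HasAntidiagonal.mem_antidiagonal] at h1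
    rw [Finset.Nat.mem_antidiagonalTuple] at h2
    refine Sigma.ext ?_ ?_
    · simp only [Fin.cons_zero, Fin.cons_succ]
      exact Prod.ext rfl h2
    · simp only [Fin.cons_succ]
      exact heq_of_eq rfl
  · intro q hq
    exact congrArg g (Fin.cons_self_tail q).symm
end L42
namespace L42

/-- The key sum: `UU m r M` = sum over `c ∈ [0,N]^m` (as the `m` right factors) and
`k ∈ (-∞,N]^r` (the `XcoefN` part) with total sum of indices `M`. -/
def UU {n : ℕ} (C : Matrix (Fin n) (Fin n) ℤ) (N : ℤ) (i : Fin n) :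
    ℕ → ℕ → ℤ → ULoop C
  | 0, r, M => XcoefN C N i r (-M - r)
  | m+1, r, M => ∑ b ∈ Finset.range (N.toNat + 1), UU C N i m r (M - b) * fik C i b

variable {n : ℕ} (C : Matrix (Fin n) (Fin n) ℤ) (N : ℤ) (i : Fin n)

lemma commute_fik_Xcoef (a : ℤ) (r : ℕ) (s : ℤ) : Commute (fik C i a) (Xcoef C i r s) := by
  unfold Xcoef
  split
  · refine Commute.sum_right _ _ _ fun x _ => Commute.list_prod_right _ _ fun y hy => ?_
    rw [List.mem_ofFn] at hy
    obtain ⟨j, rfl⟩ := hy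
    exact fik_commute C i a _
  · exact Commute.zero_right _

lemma commute_fik_XcoefN (a : ℤ) (r : ℕ) (s : ℤ) : Commute (fik C i a) (XcoefN C N i r s) := by
  unfold XcoefN
  split
  · refine Commute.sum_right _ _ _ fun x _ => Commute.list_prod_right _ _ fun y hy => ?_
    rw [List.mem_ofFn] at hy
    obtain ⟨j, rfl⟩ := hy
    exact fik_commute C i a _
  · exact Commute.zero_right _

lemma commute_fik_UU (a : ℤ) (m r : ℕ) (M : ℤ) : Commute (fik C i a) (UU C N i m r M) := by
  induction m generalizing M with
  | zero => exact commute_fik_XcoefN C N i a r _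
  | succ m ih =>
    refine Commute.sum_right _ _ _ fun b _ => Commute.mul_right (ih _) (fik_commute C i a _)

lemma Xcoef_eq_zero {r : ℕ} {s : ℤ} (h : -s - (r:ℤ) < 0) : Xcoef C i r s = 0 :=
  if_neg (by omega)

lemma XcoefN_eq_zero {r : ℕ} {s : ℤ} (h : (r:ℤ)*N + s + r < 0) : XcoefN C N i r s = 0 :=
  if_neg (by omega)

lemma UU_eq_zero (hN0 : 0 ≤ N) (m r : ℕ) (M : ℤ) (h : ((m+r : ℕ):ℤ) * N < M) :
    UU C N i m r M = 0 := by
  induction m generalizing M with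
  | zero =>
    refine XcoefN_eq_zero C N i ?_
    push_cast at h ⊢
    nlinarith
  | succ m ih =>
    show (∑ b ∈ Finset.range (N.toNat + 1), UU C N i m r (M - b) * fik C i b) = 0
    refine Finset.sum_eq_zero fun b hb => ?_
    rw [Finset.mem_range] at hb
    have hbN : (b : ℤ) ≤ N := by omega
    rw [ih (M - b) (by push_cast at h ⊢; nlinarith), zero_mul]

lemma sum_range_int {α : Type*} [AddCommMonoid α] (t : ℕ) (g : ℤ → α) :
    ∑ b ∈ Finset.range (t + 1), g (b : ℤ) = ∑ a ∈ Finset.Icc (0:ℤ) t, g a := by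
  refine Finset.sum_nbij' (i := fun b => (b:ℤ)) (j := fun a => a.toNat) ?_ ?_ ?_ ?_ ?_ <;>
    intro b hb <;>
    simp only [Finset.mem_range, Finset.mem_Icc, Int.toNat_of_nonneg] at hb ⊢ <;> omega

lemma sum_Icc_shift {α : Type*} [AddCommMonoid α] (t : ℕ) (c : ℤ) (g : ℤ → α) :
    ∑ k ∈ Finset.range (t + 1), g (c - k) = ∑ a ∈ Finset.Icc (c - t) c, g a := by
  refine Finset.sum_nbij' (i := fun k => c - k) (j := fun a => (c - a).toNat) ?_ ?_ ?_ ?_ ?_ <;>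
    intro b hb <;>
    simp only [Finset.mem_range, Finset.mem_Icc] at hb ⊢ <;> omega

end L42
namespace L42
variable {n : ℕ} (C : Matrix (Fin n) (Fin n) ℤ) (N : ℤ) (i : Fin n)

lemma XcoefN_peel (hN0 : 0 ≤ N) (r : ℕ) (M Lo : ℤ) (hLo : Lo ≤ M - (r:ℤ)*N) :
    XcoefN C N i (r+1) (-M - ((r:ℤ)+1)) =
      ∑ a ∈ Finset.Icc Lo N, fik C i a * XcoefN C N i r (-(M - a) - r) := by
  have hrN : ((r:ℤ)+1)*N = (r:ℤ)*N + N := by ring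
  by_cases hc : 0 ≤ ((r:ℤ)+1)*N - M
  · set n0 : ℕ := (((r:ℤ)+1)*N - M).toNat with hn0def
    have hn0 : (n0:ℤ) = ((r:ℤ)+1)*N - M := Int.toNat_of_nonneg hc
    have hLHS : XcoefN C N i (r+1) (-M - ((r:ℤ)+1)) =
        ∑ x ∈ Finset.Nat.antidiagonalTuple (r+1) n0,
          (List.ofFn fun j : Fin (r+1) => fik C i (N - (x j : ℤ))).prod := by
      unfold XcoefN
      have e1 : ((r+1:ℕ):ℤ)*N + (-M - ((r:ℤ)+1)) + ((r+1:ℕ):ℤ) = ((r:ℤ)+1)*N - M := by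
        push_cast; ring
      rw [e1, if_pos hc]
    rw [hLHS, sum_adT_succ]
    have hinner : ∀ pq ∈ Finset.HasAntidiagonal.antidiagonal n0,
        (∑ y ∈ Finset.Nat.antidiagonalTuple r pq.2,
          (List.ofFn fun j : Fin (r+1) => fik C i (N - ((Fin.cons pq.1 y : Fin (r+1) → ℕ) j : ℤ))).prod)
        = fik C i (N - pq.1) * XcoefN C N i r (-(M - (N - pq.1)) - r) := by
      intro pq hpq
      rw [Finset.HasAntidiagonal.mem_antidiagonal] at hpq
      have hXN : XcoefN C N i r (-(M - (N - pq.1)) - r) =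
          ∑ y ∈ Finset.Nat.antidiagonalTuple r pq.2,
            (List.ofFn fun j : Fin r => fik C i (N - (y j : ℤ))).prod := by
        unfold XcoefN
        have e2 : (r:ℤ)*N + (-(M - (N - (pq.1:ℤ))) - r) + r = ((pq.2:ℕ):ℤ) := by
          have hc2 : (pq.1:ℤ) + (pq.2:ℤ) = (n0:ℤ) := by exact_mod_cast hpq
          omega
        rw [e2, if_pos (by positivity), Int.toNat_natCast]
      rw [hXN, Finset.mul_sum]
      refine Finset.sum_congr rfl fun y _ => ?_
      simp only [List.ofFn_succ, Fin.cons_zero, Fin.cons_succ, List.prod_cons]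
    rw [Finset.sum_congr rfl hinner, Finset.Nat.sum_antidiagonal_eq_sum_range_succ_mk]
    have := sum_Icc_shift n0 N (fun a => fik C i a * XcoefN C N i r (-(M - a) - r))
    rw [show (∑ k ∈ Finset.range (n0 + 1),
        fik C i (N - (k:ℤ)) * XcoefN C N i r (-(M - (N - (k:ℤ))) - r)) =
        ∑ a ∈ Finset.Icc (N - (n0:ℤ)) N, fik C i a * XcoefN C N i r (-(M - a) - r) from this]
    refine Finset.sum_subset (Finset.Icc_subset_Icc_left (by omega)) fun a ha hna => ?_
    rw [Finset.mem_Icc] at ha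
    rw [Finset.mem_Icc] at hna
    rw [XcoefN_eq_zero C N i (by omega), mul_zero]
  · rw [XcoefN_eq_zero C N i (by push_cast; omega)]
    symm
    refine Finset.sum_eq_zero fun a ha => ?_
    rw [Finset.mem_Icc] at ha
    rw [XcoefN_eq_zero C N i (by omega), mul_zero]

lemma Xcoef_peel (m : ℕ) (M Hi : ℤ) (hHi : M ≤ Hi) :
    Xcoef C i (m+1) (-M - ((m:ℤ)+1)) =
      ∑ c ∈ Finset.Icc (0:ℤ) Hi, fik C i c * Xcoef C i m (-(M - c) - m) := by
  by_cases h0 : 0 ≤ M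
  · set n0 : ℕ := M.toNat with hn0def
    have hn0 : (n0:ℤ) = M := Int.toNat_of_nonneg h0
    have hLHS : Xcoef C i (m+1) (-M - ((m:ℤ)+1)) =
        ∑ x ∈ Finset.Nat.antidiagonalTuple (m+1) n0,
          (List.ofFn fun j : Fin (m+1) => fik C i (x j : ℤ)).prod := by
      unfold Xcoef
      have e1 : -(-M - ((m:ℤ)+1)) - ((m+1:ℕ):ℤ) = M := by push_cast; ring
      rw [e1, if_pos h0]
    rw [hLHS, sum_adT_succ]
    have hinner : ∀ pq ∈ Finset.HasAntidiagonal.antidiagonal n0,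
        (∑ y ∈ Finset.Nat.antidiagonalTuple m pq.2,
          (List.ofFn fun j : Fin (m+1) => fik C i ((Fin.cons pq.1 y : Fin (m+1) → ℕ) j : ℤ)).prod)
        = fik C i pq.1 * Xcoef C i m (-(M - pq.1) - m) := by
      intro pq hpq
      rw [Finset.HasAntidiagonal.mem_antidiagonal] at hpq
      have hX : Xcoef C i m (-(M - pq.1) - m) =
          ∑ y ∈ Finset.Nat.antidiagonalTuple m pq.2,
            (List.ofFn fun j : Fin m => fik C i (y j : ℤ)).prod := by
        unfold Xcoef
        have e2 : -(-(M - (pq.1:ℤ)) - m) - (m:ℤ) = ((pq.2:ℕ):ℤ) := by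
          have hc2 : (pq.1:ℤ) + (pq.2:ℤ) = (n0:ℤ) := by exact_mod_cast hpq
          omega
        rw [e2, if_pos (by positivity), Int.toNat_natCast]
      rw [hX, Finset.mul_sum]
      refine Finset.sum_congr rfl fun y _ => ?_
      simp only [List.ofFn_succ, Fin.cons_zero, Fin.cons_succ, List.prod_cons]
    rw [Finset.sum_congr rfl hinner, Finset.Nat.sum_antidiagonal_eq_sum_range_succ_mk]
    have := sum_range_int n0 (fun a => fik C i a * Xcoef C i m (-(M - a) - m))
    rw [show (∑ k ∈ Finset.range (n0 + 1),
        fik C i (k:ℤ) * Xcoef C i m (-(M - (k:ℤ)) - m)) =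
        ∑ a ∈ Finset.Icc (0:ℤ) (n0:ℤ), fik C i a * Xcoef C i m (-(M - a) - m) from this]
    refine Finset.sum_subset (Finset.Icc_subset_Icc_right (by omega)) fun a ha hna => ?_
    rw [Finset.mem_Icc] at ha
    rw [Finset.mem_Icc] at hna
    rw [Xcoef_eq_zero C i (by omega), mul_zero]
  · rw [Xcoef_eq_zero C i (by push_cast; omega)]
    symm
    refine Finset.sum_eq_zero fun a ha => ?_
    rw [Finset.mem_Icc] at ha
    rw [Xcoef_eq_zero C i (by omega), mul_zero]

end L42
namespace L42
variable {n : ℕ} (C : Matrix (Fin n) (Fin n) ℤ) (N : ℤ) (i : Fin n)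

lemma UU_succ_Icc (hN0 : 0 ≤ N) (m r : ℕ) (M : ℤ) :
    UU C N i (m+1) r M = ∑ a ∈ Finset.Icc (0:ℤ) N, fik C i a * UU C N i m r (M - a) := by
  show (∑ b ∈ Finset.range (N.toNat + 1), UU C N i m r (M - b) * fik C i b) = _
  have h1 : ∀ b : ℕ, UU C N i m r (M - b) * fik C i b = fik C i b * UU C N i m r (M - b) :=
    fun b => ((commute_fik_UU C N i b m r (M - b)).eq).symm
  rw [Finset.sum_congr rfl fun b _ => h1 b]
  have := sum_range_int N.toNat (fun a => fik C i a * UU C N i m r (M - a))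
  rw [Int.toNat_of_nonneg hN0] at this
  exact this

lemma UU_peel (hN0 : 0 ≤ N) (m r : ℕ) : ∀ M Lo : ℤ, Lo ≤ M - ((m+r:ℕ):ℤ)*N →
    UU C N i m (r+1) M = ∑ a ∈ Finset.Icc Lo N, fik C i a * UU C N i m r (M - a) := by
  induction m with
  | zero =>
    intro M Lo hLo
    show XcoefN C N i (r+1) (-M - ((r+1:ℕ):ℤ)) = _
    rw [show ((r+1:ℕ):ℤ) = (r:ℤ)+1 by push_cast; ring]
    exact XcoefN_peel C N i hN0 r M Lo (by push_cast at hLo ⊢; linarith)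
  | succ m ih =>
    intro M Lo hLo
    show (∑ b ∈ Finset.range (N.toNat + 1), UU C N i m (r+1) (M - b) * fik C i b) = _
    have hstep : ∀ b ∈ Finset.range (N.toNat + 1),
        UU C N i m (r+1) (M - b) * fik C i b =
          ∑ a ∈ Finset.Icc Lo N, (fik C i a * UU C N i m r (M - b - a)) * fik C i b := by
      intro b hb
      rw [Finset.mem_range] at hb
      have hbN : (b:ℤ) ≤ N := by omega
      rw [ih (M - b) Lo (by push_cast at hLo ⊢; nlinarith), Finset.sum_mul]
    rw [Finset.sum_congr rfl hstep, Finset.sum_comm]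
    refine Finset.sum_congr rfl fun a _ => ?_
    show (∑ b ∈ Finset.range (N.toNat + 1), (fik C i a * UU C N i m r (M - b - a)) * fik C i b)
      = fik C i a * UU C N i (m+1) r (M - a)
    show _ = fik C i a * ∑ b ∈ Finset.range (N.toNat + 1), UU C N i m r (M - a - b) * fik C i b
    rw [Finset.mul_sum]
    refine Finset.sum_congr rfl fun b _ => ?_
    rw [mul_assoc, show M - b - a = M - a - b by ring]

lemma UU_split (hN0 : 0 ≤ N) (m r : ℕ) (M Lo : ℤ)
    (h1 : Lo ≤ M - ((m+r:ℕ):ℤ)*N) (h2 : Lo ≤ 0) :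
    UU C N i m (r+1) M =
      (∑ a ∈ Finset.Icc Lo (-1), fik C i a * UU C N i m r (M - a)) + UU C N i (m+1) r M := by
  rw [UU_peel C N i hN0 m r M Lo h1, UU_succ_Icc C N i hN0 m r M]
  have hu : Finset.Icc Lo N = Finset.Icc Lo (-1) ∪ Finset.Icc 0 N := by
    ext a
    simp only [Finset.mem_Icc, Finset.mem_union]
    omega
  have hd : Disjoint (Finset.Icc Lo (-1)) (Finset.Icc (0:ℤ) N) := by
    rw [Finset.disjoint_left]
    intro a ha hb
    rw [Finset.mem_Icc] at ha hb
    omega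
  rw [hu, Finset.sum_union hd]

end L42
namespace L42
variable {n : ℕ} (C : Matrix (Fin n) (Fin n) ℤ) (N : ℤ) (i : Fin n)

/-- threshold sum -/
def Th {p : ℕ} (iseq : Fin p → Fin n) (ℓ : Fin p → ℕ) (i : Fin n) (r : ℕ) : ℕ :=
  ∑ k : Fin p, if iseq k = i then min r (ℓ k) else 0

variable {p : ℕ} (iseq : Fin p → Fin n) (ℓ : Fin p → ℕ)

lemma Th_mono (r : ℕ) : Th iseq ℓ i r ≤ Th iseq ℓ i (r+1) :=
  Finset.sum_le_sum fun k _ => by split <;> omega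

lemma Th_le_p : Th iseq ℓ i 1 ≤ p := by
  have h : Th iseq ℓ i 1 ≤ ∑ _k : Fin p, 1 :=
    Finset.sum_le_sum fun k _ => by split <;> omega
  simpa using h

lemma fik_eq_Xcoef (k : ℤ) (hk : 0 ≤ k) : Xcoef C i 1 (-k - 1) = fik C i k := by
  unfold Xcoef
  have e : -(-k - 1) - ((1:ℕ):ℤ) = k := by push_cast; ring
  rw [e, if_pos hk, Finset.Nat.antidiagonalTuple_one, Finset.sum_singleton]
  simp only [List.ofFn_succ, List.ofFn_zero, List.prod_cons, List.prod_nil, mul_one,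
    Matrix.cons_val_zero]
  rw [Int.toNat_of_nonneg hk]

lemma Xcoef_zero_eq (M : ℤ) : Xcoef C i 0 (-M - ((0:ℕ):ℤ)) = XcoefN C N i 0 (-M - ((0:ℕ):ℤ)) := by
  unfold Xcoef XcoefN
  simp only [Nat.cast_zero, Nat.cast_ofNat, zero_mul, zero_add, sub_zero, neg_neg, add_zero]
  rcases lt_trichotomy M 0 with h | h | h
  · rw [if_neg (by omega), if_pos (by omega)]
    rw [show (-M).toNat = ((-M).toNat - 1) + 1 by omega, Finset.Nat.antidiagonalTuple_zero_succ]
    simp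
  · subst h
    norm_num
  · rw [if_pos (by omega), if_neg (by omega)]
    rw [show M.toNat = (M.toNat - 1) + 1 by omega, Finset.Nat.antidiagonalTuple_zero_succ]
    simp

/-- the left ideal generated by the `f_{i,k}`, `k > N`, for our fixed `i`. -/
def KId : Ideal (ULoop C) := Ideal.span {u : ULoop C | ∃ k : ℤ, N < k ∧ u = fik C i k}

lemma UU_diff_mem (hN0 : 0 ≤ N) (m : ℕ) (M : ℤ) :
    Xcoef C i m (-M - (m:ℤ)) - UU C N i m 0 M ∈ KId C N i := by
  induction m generalizing M with
  | zero =>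
    rw [show UU C N i 0 0 M = XcoefN C N i 0 (-M - ((0:ℕ):ℤ)) from rfl, ← Xcoef_zero_eq C N i M,
      sub_self]
    exact zero_mem _
  | succ m ih =>
    have hHiM : M ≤ max M N := le_max_left _ _
    have hHiN : N ≤ max M N := le_max_right _ _
    have key : Xcoef C i (m+1) (-M - ((m+1:ℕ):ℤ)) - UU C N i (m+1) 0 M
        = (∑ c ∈ Finset.Icc (0:ℤ) N,
            fik C i c * (Xcoef C i m (-(M-c) - (m:ℤ)) - UU C N i m 0 (M - c)))
          + ∑ c ∈ Finset.Icc (N+1) (max M N), fik C i c * Xcoef C i m (-(M-c) - (m:ℤ)) := by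
      rw [show ((m+1:ℕ):ℤ) = (m:ℤ)+1 by push_cast; ring]
      rw [Xcoef_peel C i m M (max M N) hHiM, UU_succ_Icc C N i hN0 m 0 M]
      have hu : Finset.Icc (0:ℤ) (max M N) = Finset.Icc (0:ℤ) N ∪ Finset.Icc (N+1) (max M N) := by
        ext a
        simp only [Finset.mem_Icc, Finset.mem_union]
        omega
      have hd : Disjoint (Finset.Icc (0:ℤ) N) (Finset.Icc (N+1) (max M N)) := by
        rw [Finset.disjoint_left]
        intro a ha hb
        rw [Finset.mem_Icc] at ha hb
        omega
      rw [hu, Finset.sum_union hd]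
      simp only [mul_sub, Finset.sum_sub_distrib]
      exact add_sub_right_comm _ _ _
    rw [key]
    refine add_mem (Ideal.sum_mem _ fun c _ => Ideal.mul_mem_left _ _ (ih (M - c)))
      (Ideal.sum_mem _ fun c hc => ?_)
    rw [Finset.mem_Icc] at hc
    rw [(commute_fik_Xcoef C i c m _).eq]
    exact Ideal.mul_mem_left _ _ (Ideal.subset_span ⟨c, by omega, rfl⟩)

end L42
namespace L42
variable {n : ℕ} (C : Matrix (Fin n) (Fin n) ℤ) (N : ℤ) (i : Fin n)
variable {p : ℕ} (iseq : Fin p → Fin n) (ℓ : Fin p → ℕ)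

def II : Ideal (ULoop C) :=
  Ideal.span {u : ULoop C | ∃ (i : Fin n) (r : ℕ) (s : ℤ), 0 < r ∧
        s < -((∑ k : Fin p, if iseq k = i then min r (ℓ k) else 0 : ℕ) : ℤ) ∧
        u = Xcoef C i r s}

def JJ : Ideal (ULoop C) :=
  Ideal.span ({u : ULoop C | ∃ (i : Fin n) (k : ℤ), N < k ∧ u = fik C i k} ∪
      {u : ULoop C | ∃ (i : Fin n) (r : ℕ) (s : ℤ), 0 < r ∧
        s < -((∑ k : Fin p, if iseq k = i then min r (ℓ k) else 0 : ℕ) : ℤ) ∧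
        u = XcoefN C N i r s})

lemma KId_le_JJ : KId C N i ≤ JJ C N iseq ℓ := by
  rw [KId, Ideal.span_le]
  rintro u ⟨k, hk, rfl⟩
  exact SetLike.mem_coe.mpr (Ideal.subset_span (Or.inl ⟨i, k, hk, rfl⟩))

lemma KId_le_II (hN0 : 0 ≤ N) (hpN : (p:ℤ) ≤ N) : KId C N i ≤ II C iseq ℓ := by
  rw [KId, Ideal.span_le]
  rintro u ⟨k, hk, rfl⟩
  refine SetLike.mem_coe.mpr
    (Ideal.subset_span ⟨i, 1, -k - 1, one_pos, ?_, (fik_eq_Xcoef C i k (by omega)).symm⟩)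
  show -k - 1 < -((Th iseq ℓ i 1 : ℕ):ℤ)
  have h := Th_le_p i iseq ℓ
  have h' : ((Th iseq ℓ i 1 : ℕ):ℤ) ≤ (p:ℤ) := by exact_mod_cast h
  omega

lemma UU_mem_J (hN0 : 0 ≤ N) : ∀ (m r : ℕ) (M : ℤ), 1 ≤ m + r →
    ((Th iseq ℓ i (m+r) : ℕ):ℤ) - ((m+r : ℕ):ℤ) < M →
    UU C N i m r M ∈ JJ C N iseq ℓ := by
  intro m
  induction m with
  | zero =>
    intro r M h1 h2
    show XcoefN C N i r (-M - (r:ℤ)) ∈ _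
    refine Ideal.subset_span (Set.mem_union_right _ ⟨i, r, -M - (r:ℤ), by omega, ?_, rfl⟩)
    show -M - (r:ℤ) < -((Th iseq ℓ i r : ℕ):ℤ)
    rw [Nat.zero_add] at h2
    push_cast at h2
    omega
  | succ m ih =>
    intro r M h1 h2
    set Lo := min (M - ((m+r:ℕ):ℤ)*N) 0 with hLodef
    have hsp := UU_split C N i hN0 m r M Lo (min_le_left _ _) (min_le_right _ _)
    have hEq : UU C N i (m+1) r M =
        UU C N i m (r+1) M - ∑ a ∈ Finset.Icc Lo (-1), fik C i a * UU C N i m r (M - a) := by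
      rw [hsp]; abel
    rw [hEq]
    refine sub_mem (ih (r+1) M (by omega) ?_) (Ideal.sum_mem _ fun a ha => ?_)
    · rw [show m + (r+1) = m + 1 + r from by omega]
      exact h2
    · rw [Finset.mem_Icc] at ha
      by_cases hmr : 1 ≤ m + r
      · refine Ideal.mul_mem_left _ _ (ih r (M - a) hmr ?_)
        have hmono := Th_mono i iseq ℓ (m+r)
        rw [show m + r + 1 = m + 1 + r from by omega] at hmono
        have hc1 : ((Th iseq ℓ i (m+r) : ℕ):ℤ) ≤ ((Th iseq ℓ i (m+1+r) : ℕ):ℤ) := by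
          exact_mod_cast hmono
        push_cast at h2 ⊢
        omega
      · have hm0 : m = 0 := by omega
        have hr0 : r = 0 := by omega
        subst hm0; subst hr0
        have hT : (0:ℤ) ≤ ((Th iseq ℓ i (0+1+0) : ℕ):ℤ) := by positivity
        rw [UU_eq_zero C N i hN0 0 0 (M - a) (by push_cast at h2 ⊢; omega), mul_zero]
        exact zero_mem _

lemma UU_mem_I (hN0 : 0 ≤ N) (hpN : (p:ℤ) ≤ N) : ∀ (r m : ℕ) (M : ℤ), 1 ≤ m + r →
    ((Th iseq ℓ i (m+r) : ℕ):ℤ) - ((m+r : ℕ):ℤ) < M →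
    UU C N i m r M ∈ II C iseq ℓ := by
  intro r
  induction r with
  | zero =>
    intro m M h1 h2
    have hq : UU C N i m 0 M =
        Xcoef C i m (-M - (m:ℤ)) - (Xcoef C i m (-M - (m:ℤ)) - UU C N i m 0 M) :=
      (sub_sub_cancel _ _).symm
    rw [hq]
    refine sub_mem (Ideal.subset_span ⟨i, m, -M - (m:ℤ), by omega, ?_, rfl⟩)
      (KId_le_II C N i iseq ℓ hN0 hpN (UU_diff_mem C N i hN0 m M))
    show -M - (m:ℤ) < -((Th iseq ℓ i m : ℕ):ℤ)
    rw [Nat.add_zero] at h2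
    push_cast at h2
    omega
  | succ r ih =>
    intro m M h1 h2
    set Lo := min (M - ((m+r:ℕ):ℤ)*N) 0 with hLodef
    rw [UU_split C N i hN0 m r M Lo (min_le_left _ _) (min_le_right _ _)]
    refine add_mem (Ideal.sum_mem _ fun a ha => ?_) (ih (m+1) M (by omega) ?_)
    · rw [Finset.mem_Icc] at ha
      by_cases hmr : 1 ≤ m + r
      · refine Ideal.mul_mem_left _ _ (ih m (M - a) hmr ?_)
        have hmono := Th_mono i iseq ℓ (m+r)
        rw [show m + r + 1 = m + (r+1) from by omega] at hmono
        have hc1 : ((Th iseq ℓ i (m+r) : ℕ):ℤ) ≤ ((Th iseq ℓ i (m+(r+1)) : ℕ):ℤ) := by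
          exact_mod_cast hmono
        push_cast at h2 ⊢
        omega
      · have hm0 : m = 0 := by omega
        have hr0 : r = 0 := by omega
        subst hm0; subst hr0
        have hT : (0:ℤ) ≤ ((Th iseq ℓ i (0+(0+1)) : ℕ):ℤ) := by positivity
        rw [UU_eq_zero C N i hN0 0 0 (M - a) (by push_cast at h2 ⊢; omega), mul_zero]
        exact zero_mem _
    · rw [show m + 1 + r = m + (r+1) from by omega]
      exact h2

end L42
/-- Lemma 4.2(i): the left ideal of `U(L𝔫₋)` generated by
`G = {X_i(r,s) : i ∈ I, r > 0, s < -∑_{k ∈ S_i} min{r,ℓ_k}}` coincides with the left ideal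
generated by `G̃_N = {f_{i,k} : k > N} ∪ {X̃_i^N(r,s) : r > 0, s < -∑_{k ∈ S_i} min{r,ℓ_k}}`,
for any integer `N ≥ p`. -/
theorem ideal_span_Xcoef_eq_ideal_span_XcoefN
    (hC : IsFiniteTypeCartanMatrix C) {p : ℕ}
    (iseq : Fin p → Fin n) (ℓ : Fin p → ℕ) (hℓ : ∀ k, 0 < ℓ k)
    (N : ℤ) (hN : (p : ℤ) ≤ N) :
    Ideal.span {u : ULoop C | ∃ (i : Fin n) (r : ℕ) (s : ℤ), 0 < r ∧
        s < -((∑ k : Fin p, if iseq k = i then min r (ℓ k) else 0 : ℕ) : ℤ) ∧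
        u = Xcoef C i r s} =
    Ideal.span ({u : ULoop C | ∃ (i : Fin n) (k : ℤ), N < k ∧ u = fik C i k} ∪
      {u : ULoop C | ∃ (i : Fin n) (r : ℕ) (s : ℤ), 0 < r ∧
        s < -((∑ k : Fin p, if iseq k = i then min r (ℓ k) else 0 : ℕ) : ℤ) ∧
        u = XcoefN C N i r s}) := by
  have hN0 : (0:ℤ) ≤ N := le_trans (by positivity) hN
  show L42.II C iseq ℓ = L42.JJ C N iseq ℓ
  refine le_antisymm ?_ ?_
  · rw [L42.II, Ideal.span_le]
    rintro u ⟨i, r, s, hr, hs, rfl⟩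
    set M := -s - (r:ℤ) with hM
    have hXU : Xcoef C i r s =
        L42.UU C N i r 0 M + (Xcoef C i r (-M - (r:ℤ)) - L42.UU C N i r 0 M) := by
      rw [show -M - (r:ℤ) = s from by omega]
      abel
    rw [SetLike.mem_coe, hXU]
    have hs' : s < -((L42.Th iseq ℓ i r : ℕ):ℤ) := hs
    refine add_mem (L42.UU_mem_J C N i iseq ℓ hN0 r 0 M (by omega) ?_)
      (L42.KId_le_JJ C N i iseq ℓ (L42.UU_diff_mem C N i hN0 r M))
    rw [Nat.add_zero]
    omega
  · rw [L42.JJ, Ideal.span_le]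
    rintro u (⟨i, k, hk, rfl⟩ | ⟨i, r, s, hr, hs, rfl⟩)
    · exact SetLike.mem_coe.mpr
        (L42.KId_le_II C N i iseq ℓ hN0 hN (Ideal.subset_span ⟨k, hk, rfl⟩))
    · have hXN : XcoefN C N i r s = L42.UU C N i 0 r (-s - (r:ℤ)) := by
        show XcoefN C N i r s = XcoefN C N i r (-(-s - (r:ℤ)) - (r:ℤ))
        norm_num
      rw [SetLike.mem_coe, hXN]
      have hs' : s < -((L42.Th iseq ℓ i r : ℕ):ℤ) := hs
      refine L42.UU_mem_I C N i iseq ℓ hN0 hN r 0 (-s - (r:ℤ)) (by omega) ?_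
      rw [Nat.zero_add]
      omega
end
end

section
/- For each i ∈ I let m^{(i)} : ℤ_{≥1} → ℤ_{≥0}, a ↦ m_a^{(i)}, be a finitely supported function (the multiplicities of the row lengths of a partition μ^{(i)}, so |μ^{(i)}| = ∑_{a≥1} a·m_a^{(i)}), and assume that not all m_a^{(i)} are zero. Define P(μ) = ∑_{i∈I} ( ∑_{a,b≥1} min{a,b}·m_a^{(i)}·m_b^{(i)} − ∑_{a≥1} a·m_a^{(i)} ) − ∑_{i<j} ∑_{a,b≥1} min{|c_{ji}|·a, |c_{ij}|·b}·m_a^{(i)}·m_b^{(j)} (the first bracket equals twice the sum of min{a,b} over unordered pairs of distinct rows of μ^{(i)}). Then P(μ) > −∑_{i∈I} |μ^{(i)}|. (This is Lemma A.3 of the paper.) -/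
private lemma sum_sum_eq_diag_add_pairs {n : ℕ} (g : Fin n → Fin n → ℝ) :
    ∑ i, ∑ j, g i j = (∑ i, g i i) + ∑ i, ∑ j, (if i < j then g i j + g j i else 0) := by
  have key : ∀ i j : Fin n, g i j =
      (if i = j then g i j else 0) + (if i < j then g i j else 0) +
        (if j < i then g i j else 0) := by
    intro i j
    rcases lt_trichotomy i j with h | h | h
    · simp [h, h.ne, not_lt_of_gt h]
    · simp [h]
    · simp [h, (h.ne).symm, not_lt_of_gt h, h.ne]
  calc ∑ i, ∑ j, g i j
      = ∑ i, ∑ j, ((if i = j then g i j else 0) + (if i < j then g i j else 0) +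
          (if j < i then g i j else 0)) := by
        refine Finset.sum_congr rfl fun i _ => Finset.sum_congr rfl fun j _ => key i j
    _ = (∑ i, ∑ j, if i = j then g i j else 0) + (∑ i, ∑ j, if i < j then g i j else 0) +
          ∑ i, ∑ j, if j < i then g i j else 0 := by
        simp [Finset.sum_add_distrib]
    _ = (∑ i, g i i) + (∑ i, ∑ j, if i < j then g i j else 0) +
          ∑ i, ∑ j, if i < j then g j i else 0 := by
        rw [Finset.sum_comm (f := fun i j => if j < i then g i j else 0)]
        simp [Finset.sum_ite_eq]
    _ = (∑ i, g i i) + ∑ i, ∑ j, (if i < j then g i j + g j i else 0) := by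
        rw [add_assoc, ← Finset.sum_add_distrib]
        congr 1
        refine Finset.sum_congr rfl fun i _ => ?_
        rw [← Finset.sum_add_distrib]
        refine Finset.sum_congr rfl fun j _ => ?_
        split_ifs <;> simp

private lemma count_min (T : ℕ) (x y : ℤ) (hx : 0 ≤ x) (hy : 0 ≤ y) (hxT : x ≤ (T : ℤ)) :
    (∑ t ∈ Finset.Icc 1 T,
      (if (t : ℤ) ≤ x then (1 : ℝ) else 0) * (if (t : ℤ) ≤ y then (1 : ℝ) else 0))
      = ((min x y : ℤ) : ℝ) := by
  have h1 : ∀ t ∈ Finset.Icc 1 T,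
      (if (t : ℤ) ≤ x then (1 : ℝ) else 0) * (if (t : ℤ) ≤ y then (1 : ℝ) else 0)
        = if t ∈ Finset.Icc 1 ((min x y).toNat) then (1 : ℝ) else 0 := by
    intro t ht
    simp only [Finset.mem_Icc] at ht
    by_cases h1 : (t : ℤ) ≤ x <;> by_cases h2 : (t : ℤ) ≤ y
    · rw [if_pos h1, if_pos h2, one_mul,
        if_pos (Finset.mem_Icc.mpr ⟨by omega, by omega⟩)]
    · rw [if_pos h1, if_neg h2, mul_zero,
        if_neg (fun hm => by rw [Finset.mem_Icc] at hm; omega)]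
    · rw [if_neg h1, if_pos h2, zero_mul,
        if_neg (fun hm => by rw [Finset.mem_Icc] at hm; omega)]
    · rw [if_neg h1, if_neg h2, zero_mul,
        if_neg (fun hm => by rw [Finset.mem_Icc] at hm; omega)]
  rw [Finset.sum_congr rfl h1, Finset.sum_ite_mem]
  have hss : Finset.Icc 1 T ∩ Finset.Icc 1 ((min x y).toNat) = Finset.Icc 1 ((min x y).toNat) := by
    ext t
    simp only [Finset.mem_inter, Finset.mem_Icc]
    omega
  rw [hss]
  have h0 : ((min x y).toNat : ℤ) = min x y := by omega
  rw [Finset.sum_const, Nat.card_Icc]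
  have h2 : (min x y).toNat + 1 - 1 = (min x y).toNat := by omega
  rw [h2, nsmul_eq_mul, mul_one, ← h0]
  exact (Int.cast_natCast _).symm
private lemma quad_identity {n : ℕ} (C : Matrix (Fin n) (Fin n) ℤ) (d : Fin n → ℤ)
    (hdpos : ∀ i, 0 < d i) (hdiag : ∀ i, C i i = 2)
    (hsym : ∀ i j, d i * C i j = d j * C j i) (v : Fin n → ℝ) :
    ((∑ i, (v i) ^ 2 / (d i : ℝ)) -
        ∑ i, ∑ j, (if i < j then ((-C i j : ℤ) : ℝ) / (d j : ℝ) * (v i * v j) else 0))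
      = (1 / 2) * ∑ i, ∑ j, ((d i * C i j : ℤ) : ℝ) * (v i / (d i : ℝ)) * (v j / (d j : ℝ)) := by
  have hd : ∀ i, ((d i : ℝ)) ≠ 0 := fun i => by exact_mod_cast (hdpos i).ne'
  rw [sum_sum_eq_diag_add_pairs
    (g := fun i j => ((d i * C i j : ℤ) : ℝ) * (v i / (d i : ℝ)) * (v j / (d j : ℝ))), mul_add]
  have hA : (1 / 2 : ℝ) * (∑ i, ((d i * C i i : ℤ) : ℝ) * (v i / (d i : ℝ)) * (v i / (d i : ℝ)))
      = ∑ i, (v i) ^ 2 / (d i : ℝ) := by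
    rw [Finset.mul_sum]
    refine Finset.sum_congr rfl fun i _ => ?_
    rw [hdiag i]
    push_cast
    field_simp [hd i]
  have hB : (1 / 2 : ℝ) * (∑ i, ∑ j, if i < j then
        ((d i * C i j : ℤ) : ℝ) * (v i / (d i : ℝ)) * (v j / (d j : ℝ)) +
          ((d j * C j i : ℤ) : ℝ) * (v j / (d j : ℝ)) * (v i / (d i : ℝ)) else 0)
      = - ∑ i, ∑ j, (if i < j then ((-C i j : ℤ) : ℝ) / (d j : ℝ) * (v i * v j) else 0) := by
    rw [Finset.mul_sum, ← Finset.sum_neg_distrib]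
    refine Finset.sum_congr rfl fun i _ => ?_
    rw [Finset.mul_sum, ← Finset.sum_neg_distrib]
    refine Finset.sum_congr rfl fun j _ => ?_
    by_cases hij : i < j
    · rw [if_pos hij, if_pos hij]
      have hs : ((d i : ℝ)) * ((C i j : ℤ) : ℝ) = ((d j : ℝ)) * ((C j i : ℤ) : ℝ) := by
        exact_mod_cast hsym i j
      push_cast
      field_simp [hd i, hd j]
      linear_combination (-(v i * v j)) * hs
    · rw [if_neg hij, if_neg hij, mul_zero, neg_zero]
  rw [hA, hB]
  ring

noncomputable section

/-- Lemma A.3: for an `I`-tuple of (multiplicity functions of) partitions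
`μ = (μ^{(1)},…,μ^{(n)})` (where `μ i a` is the number of rows of length `a ≥ 1` in
`μ^{(i)}`), not all empty, one has `P(μ) > -∑_i |μ^{(i)}|`. -/
theorem fermionic_P_gt_neg_size {n : ℕ}
    (C : Matrix (Fin n) (Fin n) ℤ) (hC : IsFiniteTypeCartanMatrix C)
    (μ : Fin n → (ℕ →₀ ℕ)) (h0 : ∀ i, μ i 0 = 0) (hne : ∃ i, μ i ≠ 0) :
    -(∑ i : Fin n, (μ i).sum fun a ca => (a : ℤ) * (ca : ℤ)) <
      (∑ i : Fin n,
          (((μ i).sum fun a ca => (μ i).sum fun b cb =>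
              (min a b : ℤ) * (ca : ℤ) * (cb : ℤ)) -
            (μ i).sum fun a ca => (a : ℤ) * (ca : ℤ))) -
        ∑ i : Fin n, ∑ j : Fin n,
          (if i < j then
            (μ i).sum fun a ca => (μ j).sum fun b cb =>
              (min ((-C j i) * (a : ℤ)) ((-C i j) * (b : ℤ))) * (ca : ℤ) * (cb : ℤ)
          else 0) := by
  classical
  obtain ⟨hdiag, hoff, d, hdpos, hsym, hpd⟩ := hC
  have hd : ∀ i, ((d i : ℝ)) ≠ 0 := fun i => by exact_mod_cast (hdpos i).ne'
  have hdR : ∀ i, (0:ℝ) < (d i : ℝ) := fun i => by exact_mod_cast hdpos i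
  -- the cutoff
  set T : ℕ := 1 + ∑ i, ∑ a ∈ (μ i).support, (d i).toNat * a with hTdef
  have hT1 : 1 ≤ T := Nat.le_add_right 1 _
  have hbound : ∀ i : Fin n, ∀ a ∈ (μ i).support, d i * (a : ℤ) ≤ (T : ℤ) := by
    intro i a ha
    have h1 : (d i).toNat * a ≤ ∑ a ∈ (μ i).support, (d i).toNat * a :=
      Finset.single_le_sum (fun _ _ => Nat.zero_le _) ha
    have h2 : (∑ a ∈ (μ i).support, (d i).toNat * a)
        ≤ ∑ i, ∑ a ∈ (μ i).support, (d i).toNat * a :=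
      Finset.single_le_sum (f := fun i => ∑ a ∈ (μ i).support, (d i).toNat * a)
        (fun _ _ => Nat.zero_le _) (Finset.mem_univ i)
    have h3 : ((d i).toNat : ℤ) = d i := Int.toNat_of_nonneg (hdpos i).le
    have h5 : (d i).toNat * a ≤ T := by
      rw [hTdef]; exact (h1.trans h2).trans (Nat.le_add_left _ 1)
    have h4 : d i * (a : ℤ) = (((d i).toNat * a : ℕ) : ℤ) := by push_cast [h3]; ring
    rw [h4]; exact_mod_cast h5
  -- the transposed column counts
  set u : Fin n → ℕ → ℝ := fun i t => ∑ a ∈ (μ i).support,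
      (if (t : ℤ) ≤ d i * (a : ℤ) then ((μ i a : ℕ) : ℝ) else 0) with hu
  -- key counting identity
  have hK : ∀ i j : Fin n,
      (∑ a ∈ (μ i).support, ∑ b ∈ (μ j).support,
        ((min (d i * (a : ℤ)) (d j * (b : ℤ)) : ℤ) : ℝ) * ((μ i a : ℕ) : ℝ) * ((μ j b : ℕ) : ℝ))
        = ∑ t ∈ Finset.Icc 1 T, u i t * u j t := by
    intro i j
    calc (∑ a ∈ (μ i).support, ∑ b ∈ (μ j).support,
          ((min (d i * (a : ℤ)) (d j * (b : ℤ)) : ℤ) : ℝ) * ((μ i a : ℕ) : ℝ) * ((μ j b : ℕ) : ℝ))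
        = ∑ a ∈ (μ i).support, ∑ b ∈ (μ j).support, ∑ t ∈ Finset.Icc 1 T,
            ((if (t : ℤ) ≤ d i * (a : ℤ) then (1:ℝ) else 0) *
              (if (t : ℤ) ≤ d j * (b : ℤ) then (1:ℝ) else 0)) *
              (((μ i a : ℕ) : ℝ) * ((μ j b : ℕ) : ℝ)) := by
          refine Finset.sum_congr rfl fun a ha => Finset.sum_congr rfl fun b hb => ?_
          rw [← Finset.sum_mul, count_min T _ _
            (mul_nonneg (hdpos i).le (Int.natCast_nonneg a))
            (mul_nonneg (hdpos j).le (Int.natCast_nonneg b)) (hbound i a ha)]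
          ring
      _ = ∑ a ∈ (μ i).support, ∑ t ∈ Finset.Icc 1 T, ∑ b ∈ (μ j).support,
            ((if (t : ℤ) ≤ d i * (a : ℤ) then (1:ℝ) else 0) *
              (if (t : ℤ) ≤ d j * (b : ℤ) then (1:ℝ) else 0)) *
              (((μ i a : ℕ) : ℝ) * ((μ j b : ℕ) : ℝ)) :=
          Finset.sum_congr rfl fun a _ => Finset.sum_comm
      _ = ∑ t ∈ Finset.Icc 1 T, ∑ a ∈ (μ i).support, ∑ b ∈ (μ j).support,
            ((if (t : ℤ) ≤ d i * (a : ℤ) then (1:ℝ) else 0) *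
              (if (t : ℤ) ≤ d j * (b : ℤ) then (1:ℝ) else 0)) *
              (((μ i a : ℕ) : ℝ) * ((μ j b : ℕ) : ℝ)) := Finset.sum_comm
      _ = ∑ t ∈ Finset.Icc 1 T, u i t * u j t := by
          refine Finset.sum_congr rfl fun t _ => ?_
          rw [hu]
          dsimp only
          rw [Finset.sum_mul_sum]
          refine Finset.sum_congr rfl fun a _ => Finset.sum_congr rfl fun b _ => ?_
          split_ifs <;> ring
  -- diagonal terms
  have hdiagmin : ∀ i : Fin n,
      (∑ a ∈ (μ i).support, ∑ b ∈ (μ i).support,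
        (min (a : ℝ) (b : ℝ)) * ((μ i a : ℕ) : ℝ) * ((μ i b : ℕ) : ℝ))
        = (1 / (d i : ℝ)) * ∑ t ∈ Finset.Icc 1 T, u i t * u i t := by
    intro i
    rw [← hK i i, Finset.mul_sum]
    refine Finset.sum_congr rfl fun a _ => ?_
    rw [Finset.mul_sum]
    refine Finset.sum_congr rfl fun b _ => ?_
    have h := mul_min_of_nonneg (a : ℤ) (b : ℤ) (hdpos i).le
    have h2 : ((d i : ℝ)) * min (a : ℝ) (b : ℝ)
        = ((min (d i * (a : ℤ)) (d i * (b : ℤ)) : ℤ) : ℝ) := by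
      rw [← h]; push_cast; ring
    field_simp [hd i] at h2 ⊢
    linear_combination ((μ i a : ℕ) : ℝ) * ((μ i b : ℕ) : ℝ) * h2
  -- cross terms
  have hcross : ∀ i j : Fin n, i < j →
      (∑ a ∈ (μ i).support, ∑ b ∈ (μ j).support,
        (min ((-(C j i : ℝ)) * (a : ℝ)) ((-(C i j : ℝ)) * (b : ℝ)))
          * ((μ i a : ℕ) : ℝ) * ((μ j b : ℕ) : ℝ))
        = ((-C i j : ℤ) : ℝ) / (d j : ℝ) * ∑ t ∈ Finset.Icc 1 T, u i t * u j t := by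
    intro i j hij
    rw [← hK i j, Finset.mul_sum]
    refine Finset.sum_congr rfl fun a _ => ?_
    rw [Finset.mul_sum]
    refine Finset.sum_congr rfl fun b _ => ?_
    have hq : (0:ℤ) ≤ -C i j := neg_nonneg.mpr (hoff i j hij.ne)
    have hz : d j * min ((-C j i) * (a : ℤ)) ((-C i j) * (b : ℤ))
        = (-C i j) * min (d i * (a : ℤ)) (d j * (b : ℤ)) := by
      rw [mul_min_of_nonneg _ _ (hdpos j).le, mul_min_of_nonneg _ _ hq]
      congr 1
      · linear_combination ((a : ℤ)) * hsym i j
      · ring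
    have h2 : ((d j : ℝ)) * min ((-(C j i : ℝ)) * (a : ℝ)) ((-(C i j : ℝ)) * (b : ℝ))
        = ((-C i j : ℤ) : ℝ) * ((min (d i * (a : ℤ)) (d j * (b : ℤ)) : ℤ) : ℝ) := by
      have := congrArg (fun x : ℤ => (x : ℝ)) hz
      push_cast at this ⊢
      linarith [this]
    field_simp [hd j] at h2 ⊢
    linear_combination ((μ i a : ℕ) : ℝ) * ((μ j b : ℕ) : ℝ) * h2
  -- nonnegativity of the quadratic form
  have hQ0 : ∀ v : Fin n → ℝ, 0 ≤ ∑ i, ∑ j, ((d i * C i j : ℤ) : ℝ) * v i * v j := by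
    intro v
    by_cases hv : v = 0
    · simp [hv]
    · exact (hpd v hv).le
  -- the main real inequality
  have hreal : (0:ℝ) <
      (∑ i : Fin n, ∑ a ∈ (μ i).support, ∑ b ∈ (μ i).support,
        (min (a : ℝ) (b : ℝ)) * ((μ i a : ℕ) : ℝ) * ((μ i b : ℕ) : ℝ)) -
      ∑ i : Fin n, ∑ j : Fin n,
        (if i < j then ∑ a ∈ (μ i).support, ∑ b ∈ (μ j).support,
          (min ((-(C j i : ℝ)) * (a : ℝ)) ((-(C i j : ℝ)) * (b : ℝ)))
            * ((μ i a : ℕ) : ℝ) * ((μ j b : ℕ) : ℝ) else 0) := by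
    have e1 : (∑ i : Fin n, ∑ a ∈ (μ i).support, ∑ b ∈ (μ i).support,
        (min (a : ℝ) (b : ℝ)) * ((μ i a : ℕ) : ℝ) * ((μ i b : ℕ) : ℝ))
        = ∑ t ∈ Finset.Icc 1 T, ∑ i, (u i t) ^ 2 / (d i : ℝ) := by
      rw [Finset.sum_comm]
      refine Finset.sum_congr rfl fun i _ => ?_
      rw [hdiagmin i, Finset.mul_sum]
      refine Finset.sum_congr rfl fun t _ => ?_
      field_simp
    have e2 : (∑ i : Fin n, ∑ j : Fin n,
        (if i < j then ∑ a ∈ (μ i).support, ∑ b ∈ (μ j).support,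
          (min ((-(C j i : ℝ)) * (a : ℝ)) ((-(C i j : ℝ)) * (b : ℝ)))
            * ((μ i a : ℕ) : ℝ) * ((μ j b : ℕ) : ℝ) else 0))
        = ∑ t ∈ Finset.Icc 1 T, ∑ i : Fin n, ∑ j : Fin n,
            (if i < j then ((-C i j : ℤ) : ℝ) / (d j : ℝ) * (u i t * u j t) else 0) := by
      calc (∑ i : Fin n, ∑ j : Fin n,
          (if i < j then ∑ a ∈ (μ i).support, ∑ b ∈ (μ j).support,
            (min ((-(C j i : ℝ)) * (a : ℝ)) ((-(C i j : ℝ)) * (b : ℝ)))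
              * ((μ i a : ℕ) : ℝ) * ((μ j b : ℕ) : ℝ) else 0))
          = ∑ i : Fin n, ∑ j : Fin n, ∑ t ∈ Finset.Icc 1 T,
              (if i < j then ((-C i j : ℤ) : ℝ) / (d j : ℝ) * (u i t * u j t) else 0) := by
            refine Finset.sum_congr rfl fun i _ => Finset.sum_congr rfl fun j _ => ?_
            by_cases hij : i < j
            · rw [if_pos hij, hcross i j hij, Finset.mul_sum]
              exact Finset.sum_congr rfl fun t _ => (if_pos hij).symm
            · rw [if_neg hij]
              simp [hij]
        _ = ∑ i : Fin n, ∑ t ∈ Finset.Icc 1 T, ∑ j : Fin n,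
              (if i < j then ((-C i j : ℤ) : ℝ) / (d j : ℝ) * (u i t * u j t) else 0) :=
            Finset.sum_congr rfl fun i _ => Finset.sum_comm
        _ = ∑ t ∈ Finset.Icc 1 T, ∑ i : Fin n, ∑ j : Fin n,
              (if i < j then ((-C i j : ℤ) : ℝ) / (d j : ℝ) * (u i t * u j t) else 0) :=
            Finset.sum_comm
    rw [e1, e2, ← Finset.sum_sub_distrib]
    have eterm : ∀ t : ℕ, ((∑ i, (u i t) ^ 2 / (d i : ℝ)) -
        ∑ i : Fin n, ∑ j : Fin n,
          (if i < j then ((-C i j : ℤ) : ℝ) / (d j : ℝ) * (u i t * u j t) else 0))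
        = (1 / 2) * ∑ i, ∑ j, ((d i * C i j : ℤ) : ℝ)
            * ((u i t) / (d i : ℝ)) * ((u j t) / (d j : ℝ)) :=
      fun t => quad_identity C d hdpos hdiag hsym (fun i => u i t)
    rw [Finset.sum_congr rfl fun t _ => eterm t]
    -- positivity
    obtain ⟨i0, hi0⟩ := hne
    obtain ⟨a0, ha0⟩ : ∃ a, μ i0 a ≠ 0 := by
      by_contra h
      push_neg at h
      exact hi0 (Finsupp.ext fun a => h a)
    have ha0ne : a0 ≠ 0 := fun h => ha0 (h ▸ h0 i0)
    have hu1 : 0 < u i0 1 := by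
      rw [hu]
      refine Finset.sum_pos' (fun a _ => ?_) ⟨a0, Finsupp.mem_support_iff.mpr ha0, ?_⟩
      · split_ifs
        · exact Nat.cast_nonneg _
        · exact le_refl 0
      · have hcond : ((1:ℕ) : ℤ) ≤ d i0 * (a0 : ℤ) := by
          have h1 : (1:ℤ) ≤ (a0 : ℤ) := by exact_mod_cast Nat.one_le_iff_ne_zero.mpr ha0ne
          push_cast
          nlinarith [hdpos i0]
        rw [if_pos hcond]
        exact_mod_cast Nat.pos_of_ne_zero ha0
    have hw1 : (fun i => u i 1 / (d i : ℝ)) ≠ 0 := by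
      intro h
      have := congrFun h i0
      simp only [Pi.zero_apply] at this
      exact absurd this (ne_of_gt (div_pos hu1 (hdR i0)))
    refine Finset.sum_pos' (fun t _ => ?_) ⟨1, Finset.mem_Icc.mpr ⟨le_refl 1, hT1⟩, ?_⟩
    · exact mul_nonneg (by norm_num) (hQ0 (fun i => u i t / (d i : ℝ)))
    · exact mul_pos (by norm_num) (hpd (fun i => u i 1 / (d i : ℝ)) hw1)
  -- conclude
  have key : (0:ℤ) <
      (∑ i : Fin n, (μ i).sum fun a ca => (μ i).sum fun b cb =>
        (min a b : ℤ) * (ca : ℤ) * (cb : ℤ)) -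
      ∑ i : Fin n, ∑ j : Fin n,
        (if i < j then
          (μ i).sum fun a ca => (μ j).sum fun b cb =>
            (min ((-C j i) * (a : ℤ)) ((-C i j) * (b : ℤ))) * (ca : ℤ) * (cb : ℤ)
        else 0) := by
    rw [← @Int.cast_pos ℝ]
    push_cast [Finsupp.sum, apply_ite (fun x : ℤ => (x : ℝ))]
    exact hreal
  rw [Finset.sum_sub_distrib]
  linarith [key]
end
end
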